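/- Let φ be a monic real polynomial of degree 2m with distinct roots, m > 1. If φ has at least one real root, then there are no ordered factorizations φ = g·h into monic degree-m complex polynomials with h equal to the complex conjugate of g (coefficientwise conjugation). If φ has no real roots, then the number of such factorizations is exactly 2^m. -/

import Mathlib

open Polynomial

noncomputable def Gpoly (T : Finset ℂ) : Polynomial ℂ := ∏ z ∈ T, (X - C z)

lemma Gpoly_monic (T : Finset ℂ) : (Gpoly T).Monic :=
  monic_prod_of_monic _ _ fun z _ => monic_X_sub_C z

lemma Gpoly_natDegree (T : Finset ℂ) : (Gpoly T).natDegree = T.card := by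
  unfold Gpoly
  rw [natDegree_prod _ _ fun z _ => X_sub_C_ne_zero z]
  simp

lemma Gpoly_roots (T : Finset ℂ) : (Gpoly T).roots = T.val := roots_prod_X_sub_C T

lemma Gpoly_map_conj (T : Finset ℂ) :
    (Gpoly T).map (starRingEnd ℂ) = Gpoly (T.image (starRingEnd ℂ)) := by
  unfold Gpoly
  rw [Polynomial.map_prod, Finset.prod_image
    (fun a _ b _ h => (starRingEnd ℂ).injective h)]
  simp

lemma Gpoly_inj : Function.Injective Gpoly := by
  intro S T h
  have := congrArg Polynomial.roots h
  rw [Gpoly_roots, Gpoly_roots] at this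
  exact Finset.val_injective this

noncomputable def transv (P S : Finset ℂ) : Finset ℂ :=
  S ∪ (P \ S).image (starRingEnd ℂ)

noncomputable def Fmap (P S : Finset ℂ) : Polynomial ℂ × Polynomial ℂ :=
  (Gpoly (transv P S), (Gpoly (transv P S)).map (starRingEnd ℂ))

theorem conjugate_factorizations (m : ℕ) (hm : 1 < m)
    (φ : Polynomial ℝ) (hmonic : φ.Monic) (hdeg : φ.natDegree = 2 * m)
    (hnodup : ((φ.map (algebraMap ℝ ℂ)).roots).Nodup) :
    ((∃ x : ℝ, φ.eval x = 0) →
      {p : Polynomial ℂ × Polynomial ℂ |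
        p.1.Monic ∧ p.2.Monic ∧ p.1.natDegree = m ∧ p.2.natDegree = m ∧
        φ.map (algebraMap ℝ ℂ) = p.1 * p.2 ∧
        p.2 = p.1.map (starRingEnd ℂ)} = ∅) ∧
    ((¬ ∃ x : ℝ, φ.eval x = 0) →
      Set.ncard {p : Polynomial ℂ × Polynomial ℂ |
        p.1.Monic ∧ p.2.Monic ∧ p.1.natDegree = m ∧ p.2.natDegree = m ∧
        φ.map (algebraMap ℝ ℂ) = p.1 * p.2 ∧
        p.2 = p.1.map (starRingEnd ℂ)} = 2 ^ m) := by
  set Φ : Polynomial ℂ := φ.map (algebraMap ℝ ℂ) with hΦ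
  have hΦmonic : Φ.Monic := hmonic.map _
  have hΦne : Φ ≠ 0 := hΦmonic.ne_zero
  have hΦdeg : Φ.natDegree = 2 * m := by rw [hΦ, natDegree_map]; exact hdeg
  have heval : ∀ x : ℝ, Φ.eval (x : ℂ) = Complex.ofReal (φ.eval x) := by
    intro x
    rw [hΦ, eval_map, show ((x:ℂ)) = algebraMap ℝ ℂ x from rfl, eval₂_at_apply]
    rfl
  have hconjΦ : Φ.map (starRingEnd ℂ) = Φ := by
    rw [hΦ, map_map]
    congr 1
    ext r
    simp
  have hsplΦ : Splits Φ := IsAlgClosed.splits Φ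
  have hrootsconj : Φ.roots.map (starRingEnd ℂ) = Φ.roots := by
    conv_rhs => rw [← hconjΦ]
    rw [hsplΦ.roots_map]
  have hcard : Multiset.card Φ.roots = 2 * m := by
    rw [splits_iff_card_roots.mp hsplΦ, hΦdeg]
  have hevalconj : ∀ (g : Polynomial ℂ) (z : ℂ),
      (g.map (starRingEnd ℂ)).eval ((starRingEnd ℂ) z) = (starRingEnd ℂ) (g.eval z) := by
    intro g z
    rw [eval_map]
    exact eval₂_at_apply (starRingEnd ℂ) z
  constructor
  · rintro ⟨x, hx⟩
    ext ⟨g, h⟩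
    simp only [Set.mem_empty_iff_false, iff_false, Set.mem_setOf_eq, not_and]
    rintro hg hh hgd hhd hfac hcj
    have hΦx : Φ.eval (x : ℂ) = 0 := by rw [heval, hx, Complex.ofReal_zero]
    have hhx : h.eval (x : ℂ) = (starRingEnd ℂ) (g.eval (x : ℂ)) := by
      rw [hcj, ← hevalconj g (x : ℂ), Complex.conj_ofReal]
    have hprod : g.eval (x : ℂ) * h.eval (x : ℂ) = 0 := by
      rw [← eval_mul, ← hfac]; exact hΦx
    have hgx : g.eval (x : ℂ) = 0 := by
      rcases mul_eq_zero.mp hprod with h1 | h1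
      · exact h1
      · rw [hhx] at h1; exact (starRingEnd ℂ).injective (by simpa using h1)
    have hhx0 : h.eval (x : ℂ) = 0 := by rw [hhx, hgx, map_zero]
    have hmemg : (x : ℂ) ∈ g.roots := (mem_roots hg.ne_zero).mpr hgx
    have hmemh : (x : ℂ) ∈ h.roots := (mem_roots hh.ne_zero).mpr hhx0
    have hroots : Φ.roots = g.roots + h.roots := by
      rw [hfac]; exact roots_mul (by rw [← hfac]; exact hΦne)
    have hcount : 2 ≤ Φ.roots.count (x : ℂ) := by
      rw [hroots, Multiset.count_add]
      have h1 : 1 ≤ g.roots.count (x : ℂ) := Multiset.one_le_count_iff_mem.mpr hmemg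
      have h2 : 1 ≤ h.roots.count (x : ℂ) := Multiset.one_le_count_iff_mem.mpr hmemh
      omega
    have := Multiset.nodup_iff_count_le_one.mp hnodup (x : ℂ)
    omega
  · intro hnoreal
    have him : ∀ z ∈ Φ.roots, z.im ≠ 0 := by
      intro z hz h0
      have hz0 : Φ.eval z = 0 := (mem_roots hΦne).mp hz
      have hzre : z = (z.re : ℂ) := by
        apply Complex.ext <;> simp [h0]
      exact hnoreal ⟨z.re, by
        have := hz0
        rw [hzre, heval] at this
        exact_mod_cast this⟩
    have hconjmem : ∀ z ∈ Φ.roots, (starRingEnd ℂ) z ∈ Φ.roots := by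
      intro z hz
      rw [← hrootsconj]
      exact Multiset.mem_map_of_mem _ hz
    classical
    set R : Finset ℂ := Φ.roots.toFinset with hR
    have hRval : R.val = Φ.roots := by
      rw [hR, Multiset.toFinset_val, Multiset.dedup_eq_self.mpr hnodup]
    have hRcard : R.card = 2 * m := by
      rw [Finset.card_def, hRval]; exact hcard
    set P : Finset ℂ := R.filter (fun z => 0 < z.im) with hP
    set N : Finset ℂ := R.filter (fun z => z.im < 0) with hN
    have hmemR : ∀ z, z ∈ R ↔ z ∈ Φ.roots := by
      intro z; rw [← hRval]; rfl
    have hNP : N = P.image (starRingEnd ℂ) := by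
      ext z
      simp only [hN, hP, Finset.mem_filter, Finset.mem_image]
      constructor
      · rintro ⟨hzR, hzim⟩
        refine ⟨(starRingEnd ℂ) z, ⟨?_, ?_⟩, by simp⟩
        · rw [hmemR]; exact hconjmem z (by rwa [hmemR] at hzR)
        · simpa using hzim
      · rintro ⟨w, ⟨hwR, hwim⟩, rfl⟩
        refine ⟨?_, by simpa using hwim⟩
        rw [hmemR]; exact hconjmem w (by rwa [hmemR] at hwR)
    have hPNdisj : Disjoint P N := by
      rw [Finset.disjoint_left]
      intro z hzP hzN
      rw [hP, Finset.mem_filter] at hzP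
      rw [hN, Finset.mem_filter] at hzN
      linarith [hzP.2, hzN.2]
    have hPNU : P ∪ N = R := by
      ext z
      simp only [hP, hN, Finset.mem_union, Finset.mem_filter]
      constructor
      · rintro (⟨h1, _⟩ | ⟨h1, _⟩) <;> exact h1
      · intro hzR
        have : z.im ≠ 0 := him z ((hmemR z).mp hzR)
        rcases this.lt_or_gt with h1 | h1
        · exact Or.inr ⟨hzR, h1⟩
        · exact Or.inl ⟨hzR, h1⟩
    have hPN : P.card + N.card = 2 * m := by
      rw [← hRcard, ← hPNU, Finset.card_union_of_disjoint hPNdisj]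
    have hPcard : P.card = m := by
      have : N.card = P.card := by
        rw [hNP, Finset.card_image_of_injective _ (starRingEnd ℂ).injective]
      omega
    have hPim : ∀ z ∈ P, 0 < z.im := fun z hz => (Finset.mem_filter.mp hz).2
    have htim : ∀ S, S ⊆ P → ∀ z ∈ transv P S,
        z ∈ S ∨ (z.im < 0 ∧ (starRingEnd ℂ) z ∈ P \ S) := by
      intro S hS z hz
      rcases Finset.mem_union.mp hz with h1 | h1
      · exact Or.inl h1
      · rcases Finset.mem_image.mp h1 with ⟨w, hw, rfl⟩
        refine Or.inr ⟨?_, ?_⟩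
        · have := hPim w (Finset.mem_sdiff.mp hw).1
          simpa using this
        · simpa using hw
    have htdisj : ∀ S, S ⊆ P → Disjoint S ((P \ S).image (starRingEnd ℂ)) := by
      intro S hS
      rw [Finset.disjoint_left]
      intro z hzS hzI
      rcases Finset.mem_image.mp hzI with ⟨w, hw, rfl⟩
      have h1 := hPim _ (hS hzS)
      have h2 := hPim w (Finset.mem_sdiff.mp hw).1
      simp only [Complex.conj_im] at h1
      linarith
    have htcard : ∀ S, S ⊆ P → (transv P S).card = m := by
      intro S hS
      rw [transv, Finset.card_union_of_disjoint (htdisj S hS),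
        Finset.card_image_of_injective _ (starRingEnd ℂ).injective,
        Finset.card_sdiff_of_subset hS]
      have := Finset.card_le_card hS
      omega
    have hΦG : Φ = Gpoly R := by
      rw [Gpoly, Finset.prod_eq_multiset_prod, hRval]
      exact hsplΦ.eq_prod_roots_of_monic hΦmonic
    have hconjconj : ∀ T : Finset ℂ,
        (T.image (starRingEnd ℂ)).image (starRingEnd ℂ) = T := by
      intro T
      rw [Finset.image_image]
      simp [Function.comp_def]
    have htunion : ∀ S, S ⊆ P →
        transv P S ∪ (transv P S).image (starRingEnd ℂ) = R := by
      intro S hS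
      rw [transv, Finset.image_union, hconjconj]
      have : S ∪ (P \ S).image (starRingEnd ℂ) ∪ (S.image (starRingEnd ℂ) ∪ (P \ S))
          = (S ∪ (P \ S)) ∪ (S ∪ (P \ S)).image (starRingEnd ℂ) := by
        rw [Finset.image_union]
        ext z
        simp only [Finset.mem_union]
        tauto
      rw [this, Finset.union_sdiff_of_subset hS, ← hNP, hPNU]
    have htconjdisj : ∀ S, S ⊆ P →
        Disjoint (transv P S) ((transv P S).image (starRingEnd ℂ)) := by
      intro S hS
      rw [Finset.disjoint_left]
      intro z hz1 hz2
      rcases Finset.mem_image.mp hz2 with ⟨u, hu, rfl⟩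
      rcases htim S hS _ hz1 with h1 | h1
      · -- conj u ∈ S
        have him1 := hPim _ (hS h1)
        rcases htim S hS _ hu with h2 | h2
        · have := hPim _ (hS h2)
          simp only [Complex.conj_im] at him1
          linarith
        · exact (Finset.mem_sdiff.mp h2.2).2 h1
      · -- (conj u).im < 0 and conj (conj u) = u ∈ P \ S
        have hu' : u ∈ P \ S := by simpa using h1.2
        rcases htim S hS _ hu with h2 | h2
        · exact (Finset.mem_sdiff.mp hu').2 h2
        · have := hPim _ (Finset.mem_sdiff.mp hu').1
          linarith [h2.1]
    have htinterP : ∀ S, S ⊆ P → transv P S ∩ P = S := by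
      intro S hS
      ext z
      simp only [Finset.mem_inter]
      constructor
      · rintro ⟨hz1, hz2⟩
        rcases htim S hS _ hz1 with h1 | h1
        · exact h1
        · exact absurd (hPim _ hz2) (by linarith [h1.1])
      · intro hz
        exact ⟨Finset.mem_union_left _ hz, hS hz⟩
    have hinj : Set.InjOn (Fmap P) ↑P.powerset := by
      intro S1 hS1 S2 hS2 hFeq
      simp only [Finset.coe_powerset, Set.mem_preimage, Set.mem_powerset_iff] at hS1 hS2
      have hS1' : S1 ⊆ P := Finset.coe_subset.mp hS1
      have hS2' : S2 ⊆ P := Finset.coe_subset.mp hS2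
      have h1 : Gpoly (transv P S1) = Gpoly (transv P S2) :=
        congrArg Prod.fst hFeq
      have h2 : transv P S1 = transv P S2 := Gpoly_inj h1
      rw [← htinterP S1 hS1', ← htinterP S2 hS2', h2]
    have hseteq : {p : Polynomial ℂ × Polynomial ℂ |
        p.1.Monic ∧ p.2.Monic ∧ p.1.natDegree = m ∧ p.2.natDegree = m ∧
        Φ = p.1 * p.2 ∧ p.2 = p.1.map (starRingEnd ℂ)}
        = ↑(P.powerset.image (Fmap P)) := by
      ext ⟨g, h⟩
      simp only [Set.mem_setOf_eq, Finset.coe_image, Set.mem_image, Finset.mem_coe,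
        Finset.mem_powerset]
      constructor
      · rintro ⟨hg, hh, hgd, hhd, hfac, hcj⟩
        have hgne : g ≠ 0 := hg.ne_zero
        have hdvd : g ∣ Φ := ⟨h, hfac⟩
        have hgle : g.roots ≤ Φ.roots := roots.le_of_dvd hΦne hdvd
        have hgnodup : g.roots.Nodup := Multiset.nodup_of_le hgle hnodup
        have hgspl : Splits g := IsAlgClosed.splits g
        have hgprod : g = Gpoly g.roots.toFinset := by
          rw [Gpoly, Finset.prod_eq_multiset_prod, Multiset.toFinset_val,
            Multiset.dedup_eq_self.mpr hgnodup]
          exact hgspl.eq_prod_roots_of_monic hg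
        have hroots2 : Φ.roots = g.roots + g.roots.map (starRingEnd ℂ) := by
          rw [hfac, roots_mul (by rw [← hfac]; exact hΦne), hcj,
            hgspl.roots_map]
        have key1 : ∀ z ∈ g.roots, (starRingEnd ℂ) z ∉ g.roots := by
          intro z hz hcz
          have hmem1 : (starRingEnd ℂ) z ∈ g.roots.map (starRingEnd ℂ) :=
            Multiset.mem_map_of_mem _ hz
          have : 2 ≤ Multiset.count ((starRingEnd ℂ) z) Φ.roots := by
            rw [hroots2, Multiset.count_add]
            have c1 := Multiset.one_le_count_iff_mem.mpr hcz
            have c2 := Multiset.one_le_count_iff_mem.mpr hmem1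
            omega
          have := Multiset.nodup_iff_count_le_one.mp hnodup ((starRingEnd ℂ) z)
          omega
        have key2 : ∀ z ∈ Φ.roots, z ∈ g.roots ∨ (starRingEnd ℂ) z ∈ g.roots := by
          intro z hz
          rw [hroots2, Multiset.mem_add] at hz
          rcases hz with hz | hz
          · exact Or.inl hz
          · rcases Multiset.mem_map.mp hz with ⟨u, hu, rfl⟩
            right
            simpa using hu
        refine ⟨P ∩ g.roots.toFinset, Finset.inter_subset_left, ?_⟩
        have hTeq : transv P (P ∩ g.roots.toFinset) = g.roots.toFinset := by
          ext z
          constructor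
          · intro hz
            rcases htim _ Finset.inter_subset_left _ hz with h1 | h1
            · exact (Finset.mem_inter.mp h1).2
            · have hw := h1.2
              rw [Finset.mem_sdiff, Finset.mem_inter] at hw
              have hwP : (starRingEnd ℂ) z ∈ P := hw.1
              have hwR : (starRingEnd ℂ) z ∈ Φ.roots :=
                (hmemR _).mp (Finset.mem_filter.mp hwP).1
              rcases key2 _ hwR with h2 | h2
              · exact absurd ⟨hwP, Multiset.mem_toFinset.mpr h2⟩ hw.2
              · rw [Multiset.mem_toFinset]
                simpa using h2
          · intro hz
            have hzr : z ∈ g.roots := Multiset.mem_toFinset.mp hz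
            have hzΦ : z ∈ Φ.roots := Multiset.mem_of_le hgle hzr
            rcases (him z hzΦ).lt_or_gt with h1 | h1
            · apply Finset.mem_union_right
              rw [Finset.mem_image]
              refine ⟨(starRingEnd ℂ) z, ?_, by simp⟩
              rw [Finset.mem_sdiff]
              have hczP : (starRingEnd ℂ) z ∈ P := by
                rw [hP, Finset.mem_filter]
                exact ⟨(hmemR _).mpr (hconjmem _ hzΦ), by simpa using h1⟩
              refine ⟨hczP, ?_⟩
              rw [Finset.mem_inter]
              rintro ⟨-, hmem⟩
              exact key1 z hzr (Multiset.mem_toFinset.mp hmem)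
            · apply Finset.mem_union_left
              rw [Finset.mem_inter]
              exact ⟨by rw [hP, Finset.mem_filter]; exact ⟨(hmemR _).mpr hzΦ, h1⟩, hz⟩
        rw [Fmap, hTeq, ← hgprod, ← hcj]
      · rintro ⟨S, hS, hFS⟩
        rw [Fmap, Prod.ext_iff] at hFS
        obtain ⟨hg', hh'⟩ := hFS
        simp only at hg' hh'
        rw [← hg', ← hh']
        refine ⟨Gpoly_monic _, (Gpoly_monic _).map _, ?_, ?_, ?_, rfl⟩
        · rw [Gpoly_natDegree]; exact htcard S hS
        · rw [natDegree_map, Gpoly_natDegree]; exact htcard S hS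
        · rw [Gpoly_map_conj, hΦG, ← htunion S hS, Gpoly,
            Finset.prod_union (htconjdisj S hS)]
          rfl
    rw [hseteq, Set.ncard_coe_finset, Finset.card_image_of_injOn hinj,
      Finset.card_powerset, hPcard]
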